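/- Let Q be an l×l stochastic matrix (Q_{ij} ≥ 0, Σ_j Q_{ij} = 1), and for each j ∈ {1,…,l} let m(j) ∈ ℝ^d and B(j) a symmetric d×d matrix such that B(j) - m(j)m(j)ᵀ is positive definite. Suppose γ : {1,…,l} → (0,1]. Define for each i: D_i = Σ_j Q_{ij} γ(j), B̄_i = (1/D_i) Σ_j Q_{ij} γ(j) B(j), μ̄_i = (1/D_i) Σ_j Q_{ij} γ(j) m(j), and γ'(i) = D_i (1 - μ̄_iᵀ B̄_i⁻¹ μ̄_i). Then B̄_i is invertible and γ'(i) ∈ (0, 1] for every i. -/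

import Mathlib

open Matrix Finset

private lemma vecMulVec_mulVec' {d : ℕ} (a b x : Fin d → ℝ) :
    vecMulVec a b *ᵥ x = (b ⬝ᵥ x) • a := by
  funext k
  simp only [mulVec, dotProduct, vecMulVec_apply, Pi.smul_apply, smul_eq_mul, mul_assoc,
    ← Finset.mul_sum]
  ring

private lemma sum_mulVec' {d l : ℕ} (A : Fin l → Matrix (Fin d) (Fin d) ℝ) (x : Fin d → ℝ) :
    (∑ j, A j) *ᵥ x = ∑ j, A j *ᵥ x := by
  funext k
  simp only [mulVec, dotProduct, Finset.sum_apply, Matrix.sum_apply, Finset.sum_mul]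
  exact Finset.sum_comm

private lemma dotProduct_sum' {d l : ℕ} (x : Fin d → ℝ) (v : Fin l → Fin d → ℝ) :
    x ⬝ᵥ (∑ j, v j) = ∑ j, x ⬝ᵥ v j := by
  simp only [dotProduct, Finset.sum_apply, Finset.mul_sum]
  exact Finset.sum_comm

private lemma sum_dotProduct' {d l : ℕ} (x : Fin d → ℝ) (v : Fin l → Fin d → ℝ) :
    (∑ j, v j) ⬝ᵥ x = ∑ j, v j ⬝ᵥ x := by
  simp only [dotProduct, Finset.sum_apply, Finset.sum_mul]
  exact Finset.sum_comm

/-- Inductive step of Proposition 3 (regime-switching recursion): if `Q` is a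
stochastic matrix, each `B j - m j (m j)ᵀ` is positive definite, and
`γ : Fin l → (0,1]`, then the weighted second-moment matrix `B̄ i` is invertible
and `γ'(i) = D i (1 - μ̄ᵢᵀ B̄ᵢ⁻¹ μ̄ᵢ) ∈ (0,1]` for every `i`. -/
theorem regime_switching_step {d l : ℕ}
    (Q : Fin l → Fin l → ℝ) (hQ : ∀ i j, 0 ≤ Q i j) (hQ1 : ∀ i, ∑ j, Q i j = 1)
    (m : Fin l → Fin d → ℝ) (B : Fin l → Matrix (Fin d) (Fin d) ℝ)
    (hBsym : ∀ j, (B j).IsSymm)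
    (hpd : ∀ j, (B j - vecMulVec (m j) (m j)).PosDef)
    (γ : Fin l → ℝ) (hγ : ∀ j, 0 < γ j ∧ γ j ≤ 1)
    (D : Fin l → ℝ) (hD : ∀ i, D i = ∑ j, Q i j * γ j)
    (Bbar : Fin l → Matrix (Fin d) (Fin d) ℝ)
    (hBbar : ∀ i, Bbar i = (D i)⁻¹ • ∑ j, (Q i j * γ j) • B j)
    (mubar : Fin l → Fin d → ℝ)
    (hmubar : ∀ i, mubar i = (D i)⁻¹ • ∑ j, (Q i j * γ j) • m j)
    (γ' : Fin l → ℝ)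
    (hγ' : ∀ i, γ' i = D i * (1 - mubar i ⬝ᵥ (Bbar i)⁻¹ *ᵥ mubar i)) :
    ∀ i, IsUnit (Bbar i).det ∧ 0 < γ' i ∧ γ' i ≤ 1 := by
  intro i
  have hw0 : ∀ j, 0 ≤ Q i j * γ j := fun j => mul_nonneg (hQ i j) (hγ j).1.le
  -- there is a positive weight
  obtain ⟨j0, -, hj0⟩ : ∃ j ∈ Finset.univ, Q i j ≠ 0 :=
    Finset.exists_ne_zero_of_sum_ne_zero (by rw [hQ1 i]; norm_num)
  have hwj0 : 0 < Q i j0 * γ j0 :=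
    mul_pos (lt_of_le_of_ne (hQ i j0) (Ne.symm hj0)) (hγ j0).1
  have hDpos : 0 < D i := by
    rw [hD i]
    exact lt_of_lt_of_le hwj0 (Finset.single_le_sum (fun j _ => hw0 j) (Finset.mem_univ j0))
  have hDle : D i ≤ 1 := by
    rw [hD i, ← hQ1 i]
    exact Finset.sum_le_sum fun j _ => mul_le_of_le_one_right (hQ i j) (hγ j).2
  -- quadratic forms
  have hquadB : ∀ x : Fin d → ℝ,
      x ⬝ᵥ Bbar i *ᵥ x = (D i)⁻¹ * ∑ j, (Q i j * γ j) * (x ⬝ᵥ B j *ᵥ x) := by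
    intro x
    rw [hBbar i, smul_mulVec, dotProduct_smul, sum_mulVec', dotProduct_sum',
      smul_eq_mul]
    congr 1
    refine Finset.sum_congr rfl fun j _ => ?_
    rw [smul_mulVec, dotProduct_smul, smul_eq_mul]
  have hmux : ∀ x : Fin d → ℝ,
      mubar i ⬝ᵥ x = (D i)⁻¹ * ∑ j, (Q i j * γ j) * (m j ⬝ᵥ x) := by
    intro x
    rw [hmubar i, smul_dotProduct, sum_dotProduct', smul_eq_mul]
    congr 1
    refine Finset.sum_congr rfl fun j _ => ?_
    rw [smul_dotProduct, smul_eq_mul]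
  -- symmetry
  have hAsymm : (Bbar i).IsSymm := by
    rw [hBbar i, Matrix.IsSymm, Matrix.transpose_smul, Matrix.transpose_sum]
    congr 1
    refine Finset.sum_congr rfl fun j _ => ?_
    rw [Matrix.transpose_smul, (hBsym j).eq]
  have hAherm : (Bbar i).IsHermitian := by
    rw [Matrix.IsHermitian, conjTranspose_eq_transpose_of_trivial]
    exact hAsymm
  have hVherm : (vecMulVec (mubar i) (mubar i)).IsHermitian := by
    rw [Matrix.IsHermitian, conjTranspose_eq_transpose_of_trivial]
    ext a b
    simp [vecMulVec_apply, mul_comm]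
  have hSherm : (Bbar i - vecMulVec (mubar i) (mubar i)).IsHermitian := hAherm.sub hVherm
  -- quadratic form of S
  have hquadS : ∀ x : Fin d → ℝ,
      x ⬝ᵥ (Bbar i - vecMulVec (mubar i) (mubar i)) *ᵥ x
        = x ⬝ᵥ Bbar i *ᵥ x - (mubar i ⬝ᵥ x) ^ 2 := by
    intro x
    rw [sub_mulVec, dotProduct_sub, vecMulVec_mulVec', dotProduct_smul, smul_eq_mul,
      dotProduct_comm x (mubar i), sq]
  -- positive definiteness of S
  have hSpd : (Bbar i - vecMulVec (mubar i) (mubar i)).PosDef := by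
    refine PosDef.of_dotProduct_mulVec_pos hSherm fun x hx => ?_
    rw [star_trivial, hquadS x, hquadB x, hmux x]
    -- decompose x ⬝ᵥ B j *ᵥ x
    have hdec : ∀ j, x ⬝ᵥ B j *ᵥ x
        = x ⬝ᵥ (B j - vecMulVec (m j) (m j)) *ᵥ x + (m j ⬝ᵥ x) ^ 2 := by
      intro j
      rw [sub_mulVec, dotProduct_sub, vecMulVec_mulVec', dotProduct_smul, smul_eq_mul,
        dotProduct_comm x (m j), sq]
      ring
    have hcpos : ∀ j, x ⬝ᵥ (B j - vecMulVec (m j) (m j)) *ᵥ x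
        = star x ⬝ᵥ (B j - vecMulVec (m j) (m j)) *ᵥ x := by
      intro j; rw [star_trivial]
    have hsum : ∑ j, (Q i j * γ j) * (x ⬝ᵥ B j *ᵥ x)
        = (∑ j, (Q i j * γ j) * (x ⬝ᵥ (B j - vecMulVec (m j) (m j)) *ᵥ x))
          + ∑ j, (Q i j * γ j) * (m j ⬝ᵥ x) ^ 2 := by
      rw [← Finset.sum_add_distrib]
      refine Finset.sum_congr rfl fun j _ => ?_
      rw [hdec j]; ring
    rw [hsum]
    -- first summand is positive
    have h1 : 0 < ∑ j, (Q i j * γ j) * (x ⬝ᵥ (B j - vecMulVec (m j) (m j)) *ᵥ x) := by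
      have hterm : ∀ j ∈ Finset.univ,
          0 ≤ (Q i j * γ j) * (x ⬝ᵥ (B j - vecMulVec (m j) (m j)) *ᵥ x) := by
        intro j _
        refine mul_nonneg (hw0 j) ?_
        rw [hcpos j]
        exact ((hpd j).posSemidef.dotProduct_mulVec_nonneg x)
      have hj0pos : 0 < (Q i j0 * γ j0) * (x ⬝ᵥ (B j0 - vecMulVec (m j0) (m j0)) *ᵥ x) := by
        refine mul_pos hwj0 ?_
        rw [hcpos j0]
        exact (hpd j0).dotProduct_mulVec_pos hx
      exact lt_of_lt_of_le hj0pos (Finset.single_le_sum hterm (Finset.mem_univ j0))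
    -- Cauchy–Schwarz for the second part
    have hcs : (∑ j, (Q i j * γ j) * (m j ⬝ᵥ x)) ^ 2
        ≤ D i * ∑ j, (Q i j * γ j) * (m j ⬝ᵥ x) ^ 2 := by
      have := Finset.sum_mul_sq_le_sq_mul_sq Finset.univ
        (fun j => Real.sqrt (Q i j * γ j))
        (fun j => Real.sqrt (Q i j * γ j) * (m j ⬝ᵥ x))
      have e1 : ∀ j, Real.sqrt (Q i j * γ j) * (Real.sqrt (Q i j * γ j) * (m j ⬝ᵥ x))
          = (Q i j * γ j) * (m j ⬝ᵥ x) := by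
        intro j; rw [← mul_assoc, Real.mul_self_sqrt (hw0 j)]
      have e2 : ∀ j, Real.sqrt (Q i j * γ j) ^ 2 = Q i j * γ j := fun j =>
        Real.sq_sqrt (hw0 j)
      have e3 : ∀ j, (Real.sqrt (Q i j * γ j) * (m j ⬝ᵥ x)) ^ 2
          = (Q i j * γ j) * (m j ⬝ᵥ x) ^ 2 := by
        intro j; rw [mul_pow, e2 j]
      simp only [e1, e2, e3] at this
      rwa [← hD i] at this
    have hDinv : 0 < (D i)⁻¹ := inv_pos.mpr hDpos
    have key : ((D i)⁻¹ * ∑ j, (Q i j * γ j) * (m j ⬝ᵥ x)) ^ 2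
        ≤ (D i)⁻¹ * ∑ j, (Q i j * γ j) * (m j ⬝ᵥ x) ^ 2 := by
      rw [mul_pow]
      have : ((D i)⁻¹) ^ 2 * (∑ j, (Q i j * γ j) * (m j ⬝ᵥ x)) ^ 2
          ≤ ((D i)⁻¹) ^ 2 * (D i * ∑ j, (Q i j * γ j) * (m j ⬝ᵥ x) ^ 2) :=
        mul_le_mul_of_nonneg_left hcs (sq_nonneg _)
      refine this.trans_eq ?_
      field_simp
    nlinarith [mul_pos hDinv h1]
  -- positive definiteness of Bbar
  have hApd : (Bbar i).PosDef := by
    refine PosDef.of_dotProduct_mulVec_pos hAherm fun x hx => ?_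
    have h := hSpd.dotProduct_mulVec_pos hx
    rw [star_trivial] at h ⊢
    rw [hquadS x] at h
    nlinarith [sq_nonneg (mubar i ⬝ᵥ x)]
  have hdet : IsUnit (Bbar i).det := hApd.det_pos.ne'.isUnit
  refine ⟨hdet, ?_⟩
  -- now analyze t = μ̄ᵀ B̄⁻¹ μ̄
  set v : Fin d → ℝ := (Bbar i)⁻¹ *ᵥ mubar i with hv
  set t : ℝ := mubar i ⬝ᵥ v with ht
  have hAv : Bbar i *ᵥ v = mubar i := by
    rw [hv, mulVec_mulVec, Matrix.mul_nonsing_inv _ hdet, one_mulVec]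
  have hγ'i : γ' i = D i * (1 - t) := hγ' i
  by_cases hmu : mubar i = 0
  · have ht0 : t = 0 := by rw [ht, hmu, zero_dotProduct]
    rw [hγ'i, ht0]
    constructor
    · linarith
    · linarith
  · -- v ≠ 0
    have hvne : v ≠ 0 := by
      intro h0
      rw [h0, mulVec_zero] at hAv
      exact hmu hAv.symm
    have hSv : v ⬝ᵥ (Bbar i - vecMulVec (mubar i) (mubar i)) *ᵥ v = t - t ^ 2 := by
      rw [sub_mulVec, dotProduct_sub, hAv, vecMulVec_mulVec', dotProduct_smul,
        smul_eq_mul, dotProduct_comm v (mubar i), ← ht, sq]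
    have hpos : 0 < t - t ^ 2 := by
      rw [← hSv]
      have := hSpd.dotProduct_mulVec_pos hvne
      rwa [star_trivial] at this
    have ht01 : 0 < t ∧ t < 1 := by
      rcases mul_pos_iff.mp (show 0 < t * (1 - t) by nlinarith) with ⟨h1, h2⟩ | ⟨h1, h2⟩
      · exact ⟨h1, by linarith⟩
      · exfalso; linarith
    rw [hγ'i]
    constructor
    · exact mul_pos hDpos (by linarith [ht01.2])
    · nlinarith [ht01.1, ht01.2]
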